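/- Let Aη = -J₀η' - Sη be the asymptotic operator on W^{1,2}(S¹, ℝ²) where J₀ = [[0,-1],[1,0]] and S(t) is a continuous loop of symmetric matrices, and suppose e : S¹ → ℝ² is a nonvanishing eigensection, Ae = μe. Then the winding number of the loop t ↦ e(t) ∈ ℝ²∖{0} is well-defined and independent of the choice of nonvanishing eigensection in the μ-eigenspace: any two nonvanishing solutions e₁, e₂ of -J₀e' - Se = μe are pointwise linearly independent or proportional, and if pointwise linearly independent their winding numbers coincide; if proportional they trivially coincide. (Special case: every nontrivial solution of the linear ODE e' = J₀(S+μ)e on S¹ is nowhere vanishing.) -/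

import Mathlib

open Real

/-- An eigensection of the asymptotic operator `Aη = -J₀η' - Sη` with eigenvalue
`μ`, i.e. a solution of the linear ODE `e' = J₀(S(t) + μ)e`, written in
components with `S(t) = [[s11, s12],[s12, s22]]` and `J₀ = [[0,-1],[1,0]]`. -/
def IsEigenSol (s11 s12 s22 : ℝ → ℝ) (μ : ℝ) (e : ℝ → ℝ × ℝ) : Prop :=
  (∀ t, HasDerivAt (fun s => (e s).1)
      (-(s12 t * (e t).1 + s22 t * (e t).2 + μ * (e t).2)) t) ∧
  (∀ t, HasDerivAt (fun s => (e s).2)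
      (s11 t * (e t).1 + s12 t * (e t).2 + μ * (e t).1) t)

/-- Forward-in-time vanishing for a planar linear ODE with continuous coefficients. -/
lemma sol_zero_forward (a b c d : ℝ → ℝ) (ha : Continuous a) (hb : Continuous b)
    (hc : Continuous c) (hd : Continuous d) (e : ℝ → ℝ × ℝ)
    (h1 : ∀ t, HasDerivAt (fun s => (e s).1) (a t * (e t).1 + b t * (e t).2) t)
    (h2 : ∀ t, HasDerivAt (fun s => (e s).2) (c t * (e t).1 + d t * (e t).2) t)
    {t₀ t : ℝ} (ht : t₀ ≤ t) (h0 : e t₀ = 0) : e t = 0 := by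
  set g : ℝ → ℝ := fun s => |a s| + |b s| + |c s| + |d s| with hg
  have hgc : Continuous g := ((ha.abs.add hb.abs).add hc.abs).add hd.abs
  obtain ⟨m, hm, hmax⟩ := isCompact_Icc.exists_isMaxOn (Set.nonempty_Icc.2 ht)
    (hgc.continuousOn : ContinuousOn g (Set.Icc t₀ t))
  set K : ℝ := g m with hK
  have hK0 : 0 ≤ K :=
    add_nonneg (add_nonneg (add_nonneg (abs_nonneg (a m)) (abs_nonneg (b m)))
      (abs_nonneg (c m))) (abs_nonneg (d m))
  -- r = |e|²
  set r : ℝ → ℝ := fun s => (e s).1 * (e s).1 + (e s).2 * (e s).2 with hrdef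
  have hr : ∀ s, HasDerivAt r
      ((a s * (e s).1 + b s * (e s).2) * (e s).1 + (e s).1 * (a s * (e s).1 + b s * (e s).2)
        + ((c s * (e s).1 + d s * (e s).2) * (e s).2 + (e s).2 * (c s * (e s).1 + d s * (e s).2))) s :=
    fun s => ((h1 s).mul (h1 s)).add ((h2 s).mul (h2 s))
  have hrnn : ∀ s, 0 ≤ r s := fun s => add_nonneg (mul_self_nonneg _) (mul_self_nonneg _)
  -- u = r * exp(-2Ks)
  set u : ℝ → ℝ := fun s => r s * Real.exp (-(2 * K) * s) with hudef
  have hexp : ∀ s : ℝ, HasDerivAt (fun x : ℝ => Real.exp (-(2 * K) * x))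
      (-(2 * K) * Real.exp (-(2 * K) * s)) s := by
    intro s
    have h : HasDerivAt (fun x : ℝ => -(2 * K) * x) (-(2 * K)) s := by
      simpa using (hasDerivAt_id s).const_mul (-(2 * K))
    simpa [mul_comm] using h.exp
  have hu : ∀ s, HasDerivAt u
      (((a s * (e s).1 + b s * (e s).2) * (e s).1 + (e s).1 * (a s * (e s).1 + b s * (e s).2)
        + ((c s * (e s).1 + d s * (e s).2) * (e s).2 + (e s).2 * (c s * (e s).1 + d s * (e s).2)))
        * Real.exp (-(2 * K) * s) + r s * (-(2 * K) * Real.exp (-(2 * K) * s))) s :=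
    fun s => (hr s).mul (hexp s)
  have hderiv_nonpos : ∀ s ∈ Set.Icc t₀ t, deriv u s ≤ 0 := by
    intro s hs
    rw [(hu s).deriv]
    have hgb : g s ≤ K := hmax hs
    have hexp_pos : 0 < Real.exp (-(2 * K) * s) := Real.exp_pos _
    have key : (a s * (e s).1 + b s * (e s).2) * (e s).1
        + (e s).1 * (a s * (e s).1 + b s * (e s).2)
        + ((c s * (e s).1 + d s * (e s).2) * (e s).2
        + (e s).2 * (c s * (e s).1 + d s * (e s).2)) ≤ 2 * K * ((e s).1 * (e s).1 + (e s).2 * (e s).2) := by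
      have e1 := (e s).1
      have hA := le_abs_self (a s); have hA' := neg_abs_le (a s)
      have hD := le_abs_self (d s); have hD' := neg_abs_le (d s)
      have hB1 : 0 ≤ (|b s| - b s) * ((e s).1 + (e s).2)^2 :=
        mul_nonneg (by simp [abs_nonneg, sub_nonneg, le_abs_self]) (sq_nonneg _)
      have hB2 : 0 ≤ (|b s| + b s) * ((e s).1 - (e s).2)^2 :=
        mul_nonneg (by linarith [neg_abs_le (b s)]) (sq_nonneg _)
      have hC1 : 0 ≤ (|c s| - c s) * ((e s).1 + (e s).2)^2 :=
        mul_nonneg (by simp [sub_nonneg, le_abs_self]) (sq_nonneg _)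
      have hC2 : 0 ≤ (|c s| + c s) * ((e s).1 - (e s).2)^2 :=
        mul_nonneg (by linarith [neg_abs_le (c s)]) (sq_nonneg _)
      have hA1 : 0 ≤ (|a s| - a s) * (e s).1^2 :=
        mul_nonneg (by simp [sub_nonneg, le_abs_self]) (sq_nonneg _)
      have hD1 : 0 ≤ (|d s| - d s) * (e s).2^2 :=
        mul_nonneg (by simp [sub_nonneg, le_abs_self]) (sq_nonneg _)
      have hKmul : (|a s| + |b s| + |c s| + |d s|) * ((e s).1^2 + (e s).2^2)
          ≤ K * ((e s).1^2 + (e s).2^2) :=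
        mul_le_mul_of_nonneg_right hgb (by positivity)
      nlinarith [mul_nonneg (abs_nonneg (a s)) (sq_nonneg (e s).2),
        mul_nonneg (abs_nonneg (d s)) (sq_nonneg (e s).1),
        mul_nonneg (abs_nonneg (b s)) (add_nonneg (sq_nonneg (e s).1) (sq_nonneg (e s).2)),
        mul_nonneg (abs_nonneg (c s)) (add_nonneg (sq_nonneg (e s).1) (sq_nonneg (e s).2))]
    have hrs : r s = (e s).1 * (e s).1 + (e s).2 * (e s).2 := rfl
    rw [hrs]
    nlinarith [mul_le_mul_of_nonneg_right key (le_of_lt hexp_pos)]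
  have hanti : AntitoneOn u (Set.Icc t₀ t) := by
    apply antitoneOn_of_deriv_nonpos (convex_Icc t₀ t)
    · exact fun s _ => ((hu s).continuousAt).continuousWithinAt
    · intro s hs
      exact ((hu s).differentiableAt).differentiableWithinAt.mono interior_subset
    · intro s hs
      exact hderiv_nonpos s (interior_subset hs)
  have hut : u t ≤ u t₀ :=
    hanti (Set.left_mem_Icc.2 ht) (Set.right_mem_Icc.2 ht) ht
  have hut0 : u t₀ = 0 := by simp [hudef, hrdef, h0]
  have hrt : r t = 0 := by
    have h1' : 0 ≤ u t := mul_nonneg (hrnn t) (Real.exp_pos _).le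
    have h2' : u t = 0 := le_antisymm (hut0 ▸ hut) h1'
    have := Real.exp_pos (-(2 * K) * t)
    have : r t * Real.exp (-(2 * K) * t) = 0 := h2'
    exact (mul_eq_zero.1 this).resolve_right (Real.exp_pos _).ne'
  have hrt' : (e t).1 * (e t).1 + (e t).2 * (e t).2 = 0 := hrt
  have h1z : (e t).1 = 0 := by nlinarith [mul_self_nonneg (e t).1, mul_self_nonneg (e t).2]
  have h2z : (e t).2 = 0 := by nlinarith [mul_self_nonneg (e t).1, mul_self_nonneg (e t).2]
  exact Prod.ext h1z h2z

lemma sol_zero (a b c d : ℝ → ℝ) (ha : Continuous a) (hb : Continuous b)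
    (hc : Continuous c) (hd : Continuous d) (e : ℝ → ℝ × ℝ)
    (h1 : ∀ t, HasDerivAt (fun s => (e s).1) (a t * (e t).1 + b t * (e t).2) t)
    (h2 : ∀ t, HasDerivAt (fun s => (e s).2) (c t * (e t).1 + d t * (e t).2) t)
    {t₀ : ℝ} (h0 : e t₀ = 0) (t : ℝ) : e t = 0 := by
  rcases le_total t₀ t with h | h
  · exact sol_zero_forward a b c d ha hb hc hd e h1 h2 h h0
  · -- time reversal
    set σ : ℝ → ℝ := fun s => t + t₀ - s with hσ
    have hσc : Continuous σ := by continuity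
    set er : ℝ → ℝ × ℝ := fun s => e (σ s) with her
    have hinner : ∀ s : ℝ, HasDerivAt σ (-1) s := by
      intro s
      simpa using (hasDerivAt_id s).const_sub (t + t₀)
    have h1' : ∀ s, HasDerivAt (fun x => (er x).1)
        ((-(a (σ s))) * (er s).1 + (-(b (σ s))) * (er s).2) s := by
      intro s
      have := (h1 (σ s)).comp s (hinner s)
      refine this.congr_deriv ?_
      simp only [her]; ring
    have h2' : ∀ s, HasDerivAt (fun x => (er x).2)
        ((-(c (σ s))) * (er s).1 + (-(d (σ s))) * (er s).2) s := by
      intro s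
      have := (h2 (σ s)).comp s (hinner s)
      refine this.congr_deriv ?_
      simp only [her]; ring
    have h0' : er t = 0 := by simp [her, hσ, h0]
    have := sol_zero_forward (fun s => -(a (σ s))) (fun s => -(b (σ s)))
      (fun s => -(c (σ s))) (fun s => -(d (σ s)))
      ((ha.comp hσc).neg) ((hb.comp hσc).neg) ((hc.comp hσc).neg) ((hd.comp hσc).neg)
      er h1' h2' h h0'
    simpa [her, hσ] using this


lemma eigen_sol_zero (s11 s12 s22 : ℝ → ℝ)
    (hc11 : Continuous s11) (hc12 : Continuous s12) (hc22 : Continuous s22)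
    (μ : ℝ) (e : ℝ → ℝ × ℝ) (he : IsEigenSol s11 s12 s22 μ e)
    {t₀ : ℝ} (h0 : e t₀ = 0) (t : ℝ) : e t = 0 := by
  apply sol_zero (fun t => -(s12 t)) (fun t => -(s22 t + μ)) (fun t => s11 t + μ) s12
    hc12.neg (hc22.add continuous_const).neg (hc11.add continuous_const) hc12 e
    ?_ ?_ h0 t
  · intro t; convert he.1 t using 1; ring
  · intro t; convert he.2 t using 1; ring

/-- The Wronskian of two eigensections is constant. -/
lemma wronskian_eq (s11 s12 s22 : ℝ → ℝ) (μ : ℝ) (e f : ℝ → ℝ × ℝ)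
    (he : IsEigenSol s11 s12 s22 μ e) (hf : IsEigenSol s11 s12 s22 μ f) (t : ℝ) :
    (e t).1 * (f t).2 - (e t).2 * (f t).1 = (e 0).1 * (f 0).2 - (e 0).2 * (f 0).1 := by
  set W : ℝ → ℝ := fun t => (e t).1 * (f t).2 - (e t).2 * (f t).1 with hWdef
  have hW : ∀ t, HasDerivAt W 0 t := by
    intro t
    have h := ((he.1 t).mul (hf.2 t)).sub ((he.2 t).mul (hf.1 t))
    refine h.congr_deriv ?_
    ring
  exact is_const_of_deriv_eq_zero (fun x => (hW x).differentiableAt)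
    (fun x => (hW x).deriv) t 0

/-- If a continuous function jumps by at least `π/2` from a multiple of `π`,
its sine is nonzero somewhere in between (increasing version). -/
lemma half_pi_crossing {D : ℝ → ℝ} (hDc : Continuous D) {u v : ℝ} (huv : u ≤ v) (k : ℤ)
    (hk : D u = k * π) (h : D u + π / 2 ≤ D v) : ∃ t, Real.sin (D t) ≠ 0 := by
  have hmem : D u + π / 2 ∈ Set.Icc (D u) (D v) := ⟨by linarith [Real.pi_pos], h⟩
  obtain ⟨t, _, ht⟩ := intermediate_value_Icc huv hDc.continuousOn hmem
  refine ⟨t, ?_⟩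
  rw [ht, hk, Real.sin_add_pi_div_two]
  have hck : Real.cos ((k : ℝ) * π) = (-1 : ℝ) ^ k := by
    simpa using Real.cos_int_mul_pi_sub 0 k
  rw [hck]
  exact zpow_ne_zero k (by norm_num)

/-- Decreasing version. -/
lemma half_pi_crossing' {D : ℝ → ℝ} (hDc : Continuous D) {u v : ℝ} (huv : u ≤ v) (k : ℤ)
    (hk : D v = k * π) (h : D v + π / 2 ≤ D u) : ∃ t, Real.sin (D t) ≠ 0 := by
  have hmem : D v + π / 2 ∈ Set.Icc (D v) (D u) := ⟨by linarith [Real.pi_pos], h⟩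
  obtain ⟨t, _, ht⟩ := intermediate_value_Icc' huv hDc.continuousOn hmem
  refine ⟨t, ?_⟩
  rw [ht, hk, Real.sin_add_pi_div_two]
  have hck : Real.cos ((k : ℝ) * π) = (-1 : ℝ) ^ k := by
    simpa using Real.cos_int_mul_pi_sub 0 k
  rw [hck]
  exact zpow_ne_zero k (by norm_num)

/-- If `sin ∘ D` never vanishes and `D` is continuous, `D` cannot increase by `π`. -/
lemma no_pi_crossing {D : ℝ → ℝ} (hDc : Continuous D) (hs : ∀ t, Real.sin (D t) ≠ 0)
    {u v : ℝ} (huv : u ≤ v) (h : D u + π ≤ D v) : False := by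
  have hπ := Real.pi_pos
  set k : ℤ := ⌈D u / π⌉ with hkdef
  have h1 : D u ≤ (k : ℝ) * π := by
    have h' := Int.le_ceil (D u / π)
    calc D u = D u / π * π := by field_simp
    _ ≤ (k : ℝ) * π := by
        apply mul_le_mul_of_nonneg_right h' hπ.le
  have hne : (k : ℝ) * π ≠ D u := by
    intro hh
    exact hs u (by rw [← hh]; exact Real.sin_int_mul_pi k)
  have h2 : (k : ℝ) * π < D u + π := by
    have h' := Int.ceil_lt_add_one (D u / π)
    calc (k : ℝ) * π < (D u / π + 1) * π := by
          apply mul_lt_mul_of_pos_right h' hπ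
    _ = D u + π := by field_simp
  have hmem : (k : ℝ) * π ∈ Set.Icc (D u) (D v) := ⟨h1, by linarith⟩
  obtain ⟨t, _, ht⟩ := intermediate_value_Icc huv hDc.continuousOn hmem
  exact hs t (by rw [ht]; exact Real.sin_int_mul_pi k)

/-- Decreasing version. -/
lemma no_pi_crossing' {D : ℝ → ℝ} (hDc : Continuous D) (hs : ∀ t, Real.sin (D t) ≠ 0)
    {u v : ℝ} (huv : u ≤ v) (h : D v + π ≤ D u) : False := by
  have hπ := Real.pi_pos
  set k : ℤ := ⌈D v / π⌉ with hkdef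
  have h1 : D v ≤ (k : ℝ) * π := by
    have h' := Int.le_ceil (D v / π)
    calc D v = D v / π * π := by field_simp
    _ ≤ (k : ℝ) * π := by
        apply mul_le_mul_of_nonneg_right h' hπ.le
  have hne : (k : ℝ) * π ≠ D v := by
    intro hh
    exact hs v (by rw [← hh]; exact Real.sin_int_mul_pi k)
  have h2 : (k : ℝ) * π < D v + π := by
    have h' := Int.ceil_lt_add_one (D v / π)
    calc (k : ℝ) * π < (D v / π + 1) * π := by
          apply mul_lt_mul_of_pos_right h' hπ
    _ = D v + π := by field_simp
  have hmem : (k : ℝ) * π ∈ Set.Icc (D v) (D u) := ⟨h1, by linarith⟩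
  obtain ⟨t, _, ht⟩ := intermediate_value_Icc' huv hDc.continuousOn hmem
  exact hs t (by rw [ht]; exact Real.sin_int_mul_pi k)

/-- The total angle variation of a closed loop with a polar decomposition is a
multiple of `2π`. -/
lemma angle_jump (ρ θ : ℝ → ℝ) (g : ℝ → ℝ × ℝ) (hg : g 1 = g 0)
    (h : ∀ t, 0 < ρ t ∧ (g t).1 = ρ t * Real.cos (θ t) ∧ (g t).2 = ρ t * Real.sin (θ t)) :
    ∃ n : ℤ, θ 1 - θ 0 = n * (2 * π) := by
  obtain ⟨hρ1, hc1, hs1⟩ := h 1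
  obtain ⟨hρ0, hc0, hs0⟩ := h 0
  have hcos : ρ 1 * Real.cos (θ 1) = ρ 0 * Real.cos (θ 0) := by rw [← hc1, ← hc0, hg]
  have hsin : ρ 1 * Real.sin (θ 1) = ρ 0 * Real.sin (θ 0) := by rw [← hs1, ← hs0, hg]
  have c1 := Real.sin_sq_add_cos_sq (θ 1)
  have c0 := Real.sin_sq_add_cos_sq (θ 0)
  have h2 : ρ 1 ^ 2 = ρ 0 ^ 2 := by
    linear_combination (ρ 1 * Real.cos (θ 1) + ρ 0 * Real.cos (θ 0)) * hcos +
      (ρ 1 * Real.sin (θ 1) + ρ 0 * Real.sin (θ 0)) * hsin - ρ 1 ^ 2 * c1 + ρ 0 ^ 2 * c0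
  have hρ : ρ 1 = ρ 0 := by
    have h3 : (ρ 1 - ρ 0) * (ρ 1 + ρ 0) = 0 := by linear_combination h2
    rcases mul_eq_zero.1 h3 with h' | h'
    · linarith
    · linarith
  rw [hρ] at hcos hsin
  have hc : Real.cos (θ 1) = Real.cos (θ 0) := mul_left_cancel₀ hρ0.ne' hcos
  have hs : Real.sin (θ 1) = Real.sin (θ 0) := mul_left_cancel₀ hρ0.ne' hsin
  have hone : Real.cos (θ 1 - θ 0) = 1 := by
    rw [Real.cos_sub, hc, hs]
    linear_combination c0
  obtain ⟨n, hn⟩ := (Real.cos_eq_one_iff _).1 hone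
  exact ⟨n, hn.symm⟩

theorem stmt_18 (s11 s12 s22 : ℝ → ℝ)
    (hc11 : Continuous s11) (hc12 : Continuous s12) (hc22 : Continuous s22)
    (hper : ∀ t, s11 (t + 1) = s11 t ∧ s12 (t + 1) = s12 t ∧ s22 (t + 1) = s22 t)
    (μ : ℝ) :
    (∀ e : ℝ → ℝ × ℝ, IsEigenSol s11 s12 s22 μ e →
      (∃ t₀, e t₀ ≠ 0) → ∀ t, e t ≠ 0) ∧
    (∀ e f : ℝ → ℝ × ℝ, IsEigenSol s11 s12 s22 μ e → IsEigenSol s11 s12 s22 μ f →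
      (∀ t, e t ≠ 0) → (∀ t, f t ≠ 0) →
      (∃ c : ℝ, ∀ t, f t = c • e t) ∨
      (∀ t, (e t).1 * (f t).2 - (e t).2 * (f t).1 ≠ 0)) ∧
    (∀ e f : ℝ → ℝ × ℝ, IsEigenSol s11 s12 s22 μ e → IsEigenSol s11 s12 s22 μ f →
      (∀ t, e (t + 1) = e t) → (∀ t, f (t + 1) = f t) →
      ∀ ρ₁ θ₁ ρ₂ θ₂ : ℝ → ℝ, Continuous θ₁ → Continuous θ₂ →
        (∀ t, 0 < ρ₁ t ∧ (e t).1 = ρ₁ t * Real.cos (θ₁ t) ∧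
          (e t).2 = ρ₁ t * Real.sin (θ₁ t)) →
        (∀ t, 0 < ρ₂ t ∧ (f t).1 = ρ₂ t * Real.cos (θ₂ t) ∧
          (f t).2 = ρ₂ t * Real.sin (θ₂ t)) →
        θ₁ 1 - θ₁ 0 = θ₂ 1 - θ₂ 0) := by
  have parta : ∀ e : ℝ → ℝ × ℝ, IsEigenSol s11 s12 s22 μ e →
      (∃ t₀, e t₀ ≠ 0) → ∀ t, e t ≠ 0 := by
    intro e he hex t het
    obtain ⟨t₀, ht₀⟩ := hex
    exact ht₀ (eigen_sol_zero s11 s12 s22 hc11 hc12 hc22 μ e he het t₀)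
  refine ⟨parta, ?_, ?_⟩
  · -- part (b)
    intro e f he hf hene hfne
    by_cases h0 : (e 0).1 * (f 0).2 - (e 0).2 * (f 0).1 = 0
    · left
      have hc : ∃ c : ℝ, f 0 = c • e 0 := by
        by_cases h1 : (e 0).1 = 0
        · have h2 : (e 0).2 ≠ 0 := fun h2 => hene 0 (Prod.ext h1 h2)
          refine ⟨(f 0).2 / (e 0).2, ?_⟩
          have hf1 : (f 0).1 = 0 := by
            have hz : (e 0).2 * (f 0).1 = 0 := by rw [h1] at h0; linarith
            exact (mul_eq_zero.1 hz).resolve_left h2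
          apply Prod.ext
          · simp [hf1, h1]
          · simp only [Prod.smul_snd, smul_eq_mul]
            field_simp
        · refine ⟨(f 0).1 / (e 0).1, ?_⟩
          apply Prod.ext
          · simp only [Prod.smul_fst, smul_eq_mul]
            field_simp
          · simp only [Prod.smul_snd, smul_eq_mul]
            rw [div_mul_eq_mul_div, eq_div_iff h1]
            linear_combination h0
      obtain ⟨c, hc⟩ := hc
      refine ⟨c, fun t => ?_⟩
      set g : ℝ → ℝ × ℝ := fun t => f t - c • e t with hgdef
      have hg : IsEigenSol s11 s12 s22 μ g := by
        constructor
        · intro t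
          have h := (hf.1 t).sub ((he.1 t).const_mul c)
          have hfun : (fun s => (g s).1) = fun s => (f s).1 - c * (e s).1 := rfl
          rw [hfun]
          refine h.congr_deriv ?_
          have hg1 : (g t).1 = (f t).1 - c * (e t).1 := rfl
          have hg2 : (g t).2 = (f t).2 - c * (e t).2 := rfl
          rw [hg1, hg2]; ring
        · intro t
          have h := (hf.2 t).sub ((he.2 t).const_mul c)
          have hfun : (fun s => (g s).2) = fun s => (f s).2 - c * (e s).2 := rfl
          rw [hfun]
          refine h.congr_deriv ?_
          have hg1 : (g t).1 = (f t).1 - c * (e t).1 := rfl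
          have hg2 : (g t).2 = (f t).2 - c * (e t).2 := rfl
          rw [hg1, hg2]; ring
      have hg0 : g 0 = 0 := by
        simp only [hgdef, hc, sub_self]
      have hz := eigen_sol_zero s11 s12 s22 hc11 hc12 hc22 μ g hg hg0 t
      have : f t - c • e t = 0 := hz
      exact sub_eq_zero.1 this
    · right
      intro t
      rw [wronskian_eq s11 s12 s22 μ e f he hf t]
      exact h0
  · -- part (c)
    intro e f he hf hpe hpf ρ₁ θ₁ ρ₂ θ₂ hθ₁c hθ₂c h₁ h₂
    have hπ := Real.pi_pos
    have hE : e 1 = e 0 := by simpa using hpe 0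
    have hF : f 1 = f 0 := by simpa using hpf 0
    obtain ⟨n₁, hn₁⟩ := angle_jump ρ₁ θ₁ e hE h₁
    obtain ⟨n₂, hn₂⟩ := angle_jump ρ₂ θ₂ f hF h₂
    set D : ℝ → ℝ := fun t => θ₂ t - θ₁ t with hDdef
    have hDc : Continuous D := hθ₂c.sub hθ₁c
    have hD0 : D 0 = θ₂ 0 - θ₁ 0 := rfl
    have hD1 : D 1 = θ₂ 1 - θ₁ 1 := rfl
    have hWs : ∀ t, (e t).1 * (f t).2 - (e t).2 * (f t).1
        = ρ₁ t * ρ₂ t * Real.sin (D t) := by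
      intro t
      obtain ⟨hp1, he1, he2⟩ := h₁ t
      obtain ⟨hp2, hf1, hf2⟩ := h₂ t
      have : D t = θ₂ t - θ₁ t := rfl
      rw [this, Real.sin_sub, he1, he2, hf1, hf2]
      ring
    suffices hD : D 1 = D 0 by
      rw [hD1, hD0] at hD; linarith
    by_cases hW0 : (e 0).1 * (f 0).2 - (e 0).2 * (f 0).1 = 0
    · -- sin (D t) = 0 for all t
      have hsinz : ∀ t, Real.sin (D t) = 0 := by
        intro t
        have hw := (wronskian_eq s11 s12 s22 μ e f he hf t).trans hW0
        rw [hWs t] at hw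
        have hne : ρ₁ t * ρ₂ t ≠ 0 := (mul_pos (h₁ t).1 (h₂ t).1).ne'
        exact (mul_eq_zero.1 hw).resolve_left hne
      obtain ⟨k₀, hk₀⟩ := Real.sin_eq_zero_iff.1 (hsinz 0)
      obtain ⟨k₁, hk₁⟩ := Real.sin_eq_zero_iff.1 (hsinz 1)
      by_contra hne
      rcases lt_trichotomy (D 0) (D 1) with hlt | heq | hgt
      · have hklt : (k₀ : ℝ) < k₁ := by
          rw [← mul_lt_mul_iff_of_pos_right hπ]; rw [hk₀, hk₁]; exact hlt
        have hkle : (k₀ : ℝ) + 1 ≤ k₁ := by exact_mod_cast Int.add_one_le_iff.2 (by exact_mod_cast hklt)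
        have hgap : D 0 + π ≤ D 1 := by
          rw [← hk₀, ← hk₁]
          nlinarith
        obtain ⟨t, ht⟩ := half_pi_crossing hDc (by norm_num : (0:ℝ) ≤ 1) k₀ hk₀.symm
          (by linarith)
        exact ht (hsinz t)
      · exact hne heq.symm
      · have hklt : (k₁ : ℝ) < k₀ := by
          rw [← mul_lt_mul_iff_of_pos_right hπ]; rw [hk₀, hk₁]; exact hgt
        have hkle : (k₁ : ℝ) + 1 ≤ k₀ := by exact_mod_cast Int.add_one_le_iff.2 (by exact_mod_cast hklt)
        have hgap : D 1 + π ≤ D 0 := by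
          rw [← hk₀, ← hk₁]
          nlinarith
        obtain ⟨t, ht⟩ := half_pi_crossing' hDc (by norm_num : (0:ℝ) ≤ 1) k₁ hk₁.symm
          (by linarith)
        exact ht (hsinz t)
    · -- sin (D t) ≠ 0 for all t
      have hsinnz : ∀ t, Real.sin (D t) ≠ 0 := by
        intro t hsin
        apply hW0
        rw [← wronskian_eq s11 s12 s22 μ e f he hf t, hWs t, hsin, mul_zero]
      have hd : D 1 - D 0 = ((n₂ - n₁ : ℤ) : ℝ) * (2 * π) := by
        rw [hD1, hD0]
        push_cast
        linarith [hn₁, hn₂]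
      rcases lt_trichotomy (D 0) (D 1) with hlt | heq | hgt
      · exfalso
        have hmpos : (0 : ℝ) < ((n₂ - n₁ : ℤ) : ℝ) := by
          by_contra hle
          push_neg at hle
          nlinarith
        have hm1 : (1 : ℝ) ≤ ((n₂ - n₁ : ℤ) : ℝ) := by
          have hz : (0 : ℤ) < n₂ - n₁ := by exact_mod_cast hmpos
          have hz' : (1 : ℤ) ≤ n₂ - n₁ := by omega
          exact_mod_cast hz'
        have hgap : D 0 + π ≤ D 1 := by nlinarith
        exact no_pi_crossing hDc hsinnz (by norm_num : (0:ℝ) ≤ 1) hgap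
      · exact heq.symm
      · exfalso
        have hmneg : ((n₂ - n₁ : ℤ) : ℝ) < 0 := by
          by_contra hle
          push_neg at hle
          nlinarith
        have hm1 : ((n₂ - n₁ : ℤ) : ℝ) ≤ -1 := by
          have hz : (n₂ - n₁ : ℤ) < 0 := by exact_mod_cast hmneg
          have hz' : (n₂ - n₁ : ℤ) ≤ -1 := by omega
          exact_mod_cast hz'
        have hgap : D 1 + π ≤ D 0 := by nlinarith
        exact no_pi_crossing' hDc hsinnz (by norm_num : (0:ℝ) ≤ 1) hgap
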